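/- Fix s > 0, b ∈ ℝ, γ < 0 and μ = 1. Then λ_ε / ε^γ → −1 and ν_ε / ε^γ → 1 as ε → 0⁺. -/

import Mathlib

open Filter

lemma keyA (u δ : ℂ) (h : u * (u + 1) = δ) (hu : u.re < 0) (hδ : 0 < δ.re) :
    ‖u + 1‖ ≤ 2 * ‖δ‖ := by
  rcases le_or_gt ‖u‖ (1/2) with hc | hc
  · exfalso
    have h1 : |u.re| ≤ ‖u‖ := by
      exact Complex.abs_re_le_norm u
    have h3 : -(1/2) ≤ u.re := by
      have := (abs_le.mp (h1.trans hc)).1; linarith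
    have h2 : δ.re = u.re * u.re - u.im * u.im + u.re := by
      rw [← h]; simp [Complex.mul_re, Complex.add_re]; ring
    nlinarith [sq_nonneg u.im,
      mul_nonneg (by linarith : (0:ℝ) ≤ u.re + 1/2) (by linarith : (0:ℝ) ≤ -u.re)]
  · have hnorm : ‖u‖ * ‖u + 1‖ = ‖δ‖ := by rw [← h, norm_mul]
    nlinarith [norm_nonneg (u + 1)]

lemma auxT (s b γ c : ℝ) (hs : 0 < s) (hγ : γ < 0) (hc : 0 ≤ c)
    (f : ℝ → ℂ)
    (hf : ∀ ε : ℝ, 0 < ε →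
      f ε * (f ε + 1)
          = (((ε ^ 2 : ℝ) : ℂ) * (s : ℂ) + Complex.I * (ε : ℂ) * (b : ℂ) + (c : ℂ))
              / (((ε ^ γ : ℝ) : ℂ)) ^ 2
        ∧ (f ε).re < 0) :
    Tendsto (fun ε : ℝ => f ε + 1) (nhdsWithin 0 (Set.Ioi 0)) (nhds 0) := by
  have hbound : ∀ ε : ℝ, ε ∈ Set.Ioi (0:ℝ) →
      ‖f ε + 1‖ ≤ 2 * ((ε ^ 2 * s + ε * |b| + c) * ε ^ (-(2*γ))) := by
    intro ε hε
    have hε : (0:ℝ) < ε := hε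
    obtain ⟨heq, hre⟩ := hf ε hε
    have htpos : (0:ℝ) < ε ^ γ := Real.rpow_pos_of_pos hε γ
    have hr2 : (0:ℝ) < ε ^ 2 := pow_pos hε 2
    set w : ℂ := ((ε ^ 2 : ℝ) : ℂ) * (s : ℂ) + Complex.I * (ε : ℂ) * (b : ℂ) + (c : ℂ) with hw
    set δ : ℂ := w / (((ε ^ γ : ℝ) : ℂ)) ^ 2 with hδdef
    have hcast : (((ε ^ γ : ℝ) : ℂ)) ^ 2 = (((ε ^ γ)^2 : ℝ) : ℂ) := by push_cast; ring
    have hwre : w.re = ε ^ 2 * s + c := by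
      have hw2 : w = (((ε ^ 2) * s + c : ℝ) : ℂ) + Complex.I * ((ε * b : ℝ) : ℂ) := by
        rw [hw]; push_cast; ring
      rw [hw2]
      simp only [Complex.add_re, Complex.mul_re, Complex.ofReal_re, Complex.ofReal_im,
        Complex.I_re, Complex.I_im]
      ring
    have hδre : 0 < δ.re := by
      rw [hδdef, hcast, Complex.div_ofReal_re, hwre]
      positivity
    have hkey := keyA (f ε) δ heq hre hδre
    have hwnorm : ‖w‖ ≤ ε ^ 2 * s + ε * |b| + c := by
      rw [hw]
      refine le_trans (norm_add_le _ _) ?_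
      refine add_le_add (le_trans (norm_add_le _ _) ?_) ?_
      · refine add_le_add ?_ ?_
        · rw [norm_mul]
          simp [Complex.norm_real, abs_of_pos hr2, abs_of_pos hs]
        · rw [norm_mul, norm_mul]
          simp [abs_of_pos hε]
      · simp [Complex.norm_real, abs_of_nonneg hc]
    have hδnorm : ‖δ‖ ≤ (ε ^ 2 * s + ε * |b| + c) / (ε ^ γ)^2 := by
      rw [hδdef, norm_div, hcast]
      have : ‖((((ε ^ γ)^2 : ℝ)) : ℂ)‖ = (ε ^ γ)^2 := by
        simp [Complex.norm_real, abs_of_pos (pow_pos htpos 2)]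
      rw [this]
      exact div_le_div_of_nonneg_right hwnorm (by positivity) |>.trans_eq rfl
    have ht2 : ε ^ (-(2*γ)) = ((ε ^ γ)^2)⁻¹ := by
      rw [Real.rpow_neg hε.le]
      congr 1
      rw [mul_comm, Real.rpow_mul hε.le]
      norm_num
    calc ‖f ε + 1‖ ≤ 2 * ‖δ‖ := hkey
      _ ≤ 2 * ((ε ^ 2 * s + ε * |b| + c) / (ε ^ γ)^2) := by linarith
      _ = 2 * ((ε ^ 2 * s + ε * |b| + c) * ε ^ (-(2*γ))) := by
          rw [ht2]; ring
  have h1 : Tendsto (fun ε : ℝ => ε ^ (-(2*γ))) (nhdsWithin 0 (Set.Ioi 0)) (nhds 0) := by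
    have hcont := (Real.continuousAt_rpow_const 0 (-(2*γ)) (Or.inr (by linarith))).tendsto
    rw [Real.zero_rpow (by intro h; nlinarith : -(2*γ) ≠ 0)] at hcont
    exact hcont.mono_left nhdsWithin_le_nhds
  have h2 : Tendsto (fun ε : ℝ => ε ^ 2 * s + ε * |b| + c)
      (nhdsWithin 0 (Set.Ioi 0)) (nhds c) := by
    have hc2 : ContinuousAt (fun ε : ℝ => ε ^ 2 * s + ε * |b| + c) 0 := by
      refine ContinuousAt.add (ContinuousAt.add ?_ ?_) continuousAt_const
      · exact ((continuous_pow 2).continuousAt).mul continuousAt_const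
      · exact continuousAt_id.mul continuousAt_const
    have := hc2.tendsto.mono_left (nhdsWithin_le_nhds (s := Set.Ioi (0:ℝ)))
    simpa using this
  have hG : Tendsto (fun ε : ℝ => 2 * ((ε ^ 2 * s + ε * |b| + c) * ε ^ (-(2*γ))))
      (nhdsWithin 0 (Set.Ioi 0)) (nhds 0) := by
    have := (h2.mul h1).const_mul 2
    simpa using this
  exact squeeze_zero_norm' (by filter_upwards [self_mem_nhdsWithin] with ε hε using hbound ε hε) hG

theorem stmt15 (s b γ μ : ℝ) (hs : 0 < s) (hγ : γ < 0) (hμ : μ = 1)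
    (lam nu : ℝ → ℂ)
    (hlam : ∀ ε : ℝ, 0 < ε →
      lam ε ^ 2 + ((ε ^ γ : ℝ) : ℂ) * lam ε
          - (((ε ^ (1 + μ) : ℝ) : ℂ) * (s : ℂ) + Complex.I * (ε : ℂ) * (b : ℂ) + 1) = 0 ∧
        (lam ε).re < 0)
    (hnu : ∀ ε : ℝ, 0 < ε →
      nu ε ^ 2 - ((ε ^ γ : ℝ) : ℂ) * nu ε
          - (((ε ^ (1 + μ) : ℝ) : ℂ) * (s : ℂ) + Complex.I * (ε : ℂ) * (b : ℂ)) = 0 ∧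
        0 < (nu ε).re) :
    Tendsto (fun ε : ℝ => lam ε / ((ε ^ γ : ℝ) : ℂ)) (nhdsWithin 0 (Set.Ioi 0)) (nhds (-1)) ∧
    Tendsto (fun ε : ℝ => nu ε / ((ε ^ γ : ℝ) : ℂ)) (nhdsWithin 0 (Set.Ioi 0)) (nhds 1) := by
  subst hμ
  have hexp : ∀ ε : ℝ, ε ^ ((1:ℝ) + 1) = ε ^ (2:ℕ) := by
    intro ε
    rw [show ((1:ℝ)+1) = ((2:ℕ):ℝ) by norm_num, Real.rpow_natCast]
  constructor
  · have hf : ∀ ε : ℝ, 0 < ε →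
        (lam ε / ((ε ^ γ : ℝ) : ℂ)) * (lam ε / ((ε ^ γ : ℝ) : ℂ) + 1)
            = (((ε ^ 2 : ℝ) : ℂ) * (s : ℂ) + Complex.I * (ε : ℂ) * (b : ℂ) + ((1:ℝ) : ℂ))
                / (((ε ^ γ : ℝ) : ℂ)) ^ 2
          ∧ ((lam ε / ((ε ^ γ : ℝ) : ℂ))).re < 0 := by
      intro ε hε
      obtain ⟨h1, h2⟩ := hlam ε hε
      rw [hexp ε] at h1
      have htpos : (0:ℝ) < ε ^ γ := Real.rpow_pos_of_pos hε γ
      have htne : ((ε ^ γ : ℝ) : ℂ) ≠ 0 := by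
        exact_mod_cast htpos.ne'
      constructor
      · have hww : lam ε ^ 2 + ((ε ^ γ : ℝ) : ℂ) * lam ε
            = ((ε ^ 2 : ℝ) : ℂ) * (s : ℂ) + Complex.I * (ε : ℂ) * (b : ℂ) + ((1:ℝ) : ℂ) := by
          push_cast
          push_cast at h1
          linear_combination h1
        calc (lam ε / ((ε ^ γ : ℝ) : ℂ)) * (lam ε / ((ε ^ γ : ℝ) : ℂ) + 1)
            = (lam ε ^ 2 + ((ε ^ γ : ℝ) : ℂ) * lam ε) / (((ε ^ γ : ℝ) : ℂ)) ^ 2 := by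
              field_simp
          _ = _ := by rw [hww]
      · rw [Complex.div_ofReal_re]
        exact div_neg_of_neg_of_pos h2 htpos
    have h := auxT s b γ 1 hs hγ zero_le_one _ hf
    have h' := h.add_const (-1 : ℂ)
    simp only [add_neg_cancel_right, zero_add] at h'
    simpa using h'
  · have hf : ∀ ε : ℝ, 0 < ε →
        (-(nu ε / ((ε ^ γ : ℝ) : ℂ))) * (-(nu ε / ((ε ^ γ : ℝ) : ℂ)) + 1)
            = (((ε ^ 2 : ℝ) : ℂ) * (s : ℂ) + Complex.I * (ε : ℂ) * (b : ℂ) + ((0:ℝ) : ℂ))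
                / (((ε ^ γ : ℝ) : ℂ)) ^ 2
          ∧ ((-(nu ε / ((ε ^ γ : ℝ) : ℂ)))).re < 0 := by
      intro ε hε
      obtain ⟨h1, h2⟩ := hnu ε hε
      rw [hexp ε] at h1
      have htpos : (0:ℝ) < ε ^ γ := Real.rpow_pos_of_pos hε γ
      have htne : ((ε ^ γ : ℝ) : ℂ) ≠ 0 := by
        exact_mod_cast htpos.ne'
      constructor
      · have hww : nu ε ^ 2 - ((ε ^ γ : ℝ) : ℂ) * nu ε
            = ((ε ^ 2 : ℝ) : ℂ) * (s : ℂ) + Complex.I * (ε : ℂ) * (b : ℂ) + ((0:ℝ) : ℂ) := by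
          push_cast
          push_cast at h1
          linear_combination h1
        calc (-(nu ε / ((ε ^ γ : ℝ) : ℂ))) * (-(nu ε / ((ε ^ γ : ℝ) : ℂ)) + 1)
            = (nu ε ^ 2 - ((ε ^ γ : ℝ) : ℂ) * nu ε) / (((ε ^ γ : ℝ) : ℂ)) ^ 2 := by
              field_simp; ring
          _ = _ := by rw [hww]
      · rw [Complex.neg_re, Complex.div_ofReal_re]
        have : 0 < (nu ε).re / (ε ^ γ) := div_pos h2 htpos
        linarith
    have h := auxT s b γ 0 hs hγ le_rfl _ hf
    have h' := h.const_sub (1 : ℂ)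
    rw [sub_zero] at h'
    exact h'.congr (fun ε => by ring)
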